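/- Let T > 0, ε ∈ (0,1), and let y : [0,T) → ℝ be differentiable with y(0) < 0 and y'(t) ≤ −(1/2)y(t)² + (1/2)(1−ε)y(0)² for all t ∈ [0,T). Then y(t) ≤ y(0) for all t ∈ [0,T), and T ≤ −2/(ε·y(0)); in particular T is finite. -/

import Mathlib

open Set

/-- Riccati-type blow-up argument concluding the proof of Theorem 1.3: if
`y : [0,T) → ℝ` is differentiable with `y(0) < 0` and
`y'(t) ≤ -(1/2)y(t)² + (1/2)(1-ε)y(0)²` on `[0,T)` with `ε ∈ (0,1)`, then
`y(t) ≤ y(0)` on `[0,T)` and `T ≤ -2/(ε y(0))`; in particular `T` is finite. -/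
theorem riccati_blowup
    (T ε : ℝ) (hT : 0 < T) (hε : ε ∈ Set.Ioo (0:ℝ) 1)
    (y y' : ℝ → ℝ)
    (hy : ∀ t ∈ Set.Ico (0:ℝ) T, HasDerivWithinAt y (y' t) (Set.Ico (0:ℝ) T) t)
    (hy0 : y 0 < 0)
    (hineq : ∀ t ∈ Set.Ico (0:ℝ) T,
      y' t ≤ -(1/2) * y t ^ 2 + (1/2) * (1 - ε) * y 0 ^ 2) :
    (∀ t ∈ Set.Ico (0:ℝ) T, y t ≤ y 0) ∧ T ≤ -2 / (ε * y 0) := by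
  obtain ⟨hε0, hε1⟩ := hε
  -- derivative within `Ici x` for points of `[0,T)`
  have hIci : ∀ x ∈ Ico (0:ℝ) T, HasDerivWithinAt y (y' x) (Ici x) x := by
    intro x hx
    refine (hy x hx).mono_of_mem_nhdsWithin ?_
    have h1 : Iio T ∈ nhdsWithin x (Ici x) :=
      mem_nhdsWithin_of_mem_nhds (Iio_mem_nhds hx.2)
    have h2 : Ici x ∩ Iio T ⊆ Ico 0 T := fun z hz => ⟨le_trans hx.1 hz.1, hz.2⟩
    exact Filter.mem_of_superset (Filter.inter_mem self_mem_nhdsWithin h1) h2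
  have hcont : ∀ b ∈ Ico (0:ℝ) T, ContinuousOn y (Icc 0 b) := by
    intro b hb
    intro x hx
    have hx' : x ∈ Ico (0:ℝ) T := ⟨hx.1, lt_of_le_of_lt hx.2 hb.2⟩
    exact ((hy x hx').continuousWithinAt).mono (fun z hz => ⟨hz.1, lt_of_le_of_lt hz.2 hb.2⟩)
  -- Part 1
  have part1 : ∀ t ∈ Ico (0:ℝ) T, y t ≤ y 0 := by
    intro t ht
    have key : ∀ ⦃x⦄, x ∈ Icc (0:ℝ) t → y x ≤ (fun _ : ℝ => y 0) x := by
      refine image_le_of_deriv_right_lt_deriv_boundary (f' := y') (B := fun _ => y 0)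
        (B' := fun _ => 0)
        (hcont t ht) (fun x hx => hIci x ⟨hx.1, lt_of_lt_of_le hx.2 (le_of_lt ht.2)⟩)
        le_rfl (fun x => hasDerivAt_const x _) ?_
      intro x hx hfx
      have hx' : x ∈ Ico (0:ℝ) T := ⟨hx.1, lt_of_lt_of_le hx.2 (le_of_lt ht.2)⟩
      have h := hineq x hx'
      have hx0 : y x = y 0 := hfx
      rw [hx0] at h
      show y' x < 0
      nlinarith [pow_two_pos_of_ne_zero (ne_of_lt hy0), mul_pos hε0 (pow_two_pos_of_ne_zero (ne_of_lt hy0))]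
    exact key ⟨ht.1, le_refl t⟩
  refine ⟨part1, ?_⟩
  -- Part 2
  have hneg : ∀ t ∈ Ico (0:ℝ) T, y t < 0 := fun t ht => lt_of_le_of_lt (part1 t ht) hy0
  have hz : ∀ t ∈ Ico (0:ℝ) T,
      HasDerivWithinAt (fun s => -(y s)⁻¹) (y' t / y t ^ 2) (Ici t) t := by
    intro t ht
    have h := ((hIci t ht).inv (ne_of_lt (hneg t ht))).neg
    refine h.congr_deriv ?_
    ring
  have hz' : ∀ t ∈ Ico (0:ℝ) T, y' t / y t ^ 2 ≤ -(ε/2) := by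
    intro t ht
    have h1 := hineq t ht
    have h2 : y t ≤ y 0 := part1 t ht
    have h3 : (0:ℝ) < y t ^ 2 := pow_two_pos_of_ne_zero (ne_of_lt (hneg t ht))
    have hsq : y 0 ^ 2 ≤ y t ^ 2 := by nlinarith [mul_nonneg (by linarith : (0:ℝ) ≤ y 0 - y t) (by nlinarith : (0:ℝ) ≤ -(y t + y 0))]
    have h4 : y' t ≤ -(ε/2) * y t ^ 2 := by nlinarith [mul_le_mul_of_nonneg_left hsq (by linarith : (0:ℝ) ≤ 1 - ε)]
    rw [div_le_iff₀ h3]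
    nlinarith
  -- bound each t
  have key2 : ∀ t ∈ Ico (0:ℝ) T, t < -2 / (ε * y 0) := by
    intro t ht
    have hcontz : ContinuousOn (fun s => -(y s)⁻¹) (Icc 0 t) := by
      refine ((hcont t ht).inv₀ ?_).neg
      intro x hx
      exact ne_of_lt (hneg x ⟨hx.1, lt_of_le_of_lt hx.2 ht.2⟩)
    have key : ∀ ⦃x⦄, x ∈ Icc (0:ℝ) t →
        (fun s => -(y s)⁻¹) x ≤ (fun s => -(y 0)⁻¹ + (-(ε/2)) * s) x := by
      refine image_le_of_deriv_right_le_deriv_boundary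
        (f' := fun s => y' s / y s ^ 2) (B' := fun _ => -(ε/2))
        hcontz (fun x hx => hz x ⟨hx.1, lt_of_lt_of_le hx.2 (le_of_lt ht.2)⟩)
        (by simp) (Continuous.continuousOn (by continuity)) ?_ ?_
      · intro x hx
        have : HasDerivAt (fun s : ℝ => -(y 0)⁻¹ + (-(ε/2)) * s) (-(ε/2)) x := by
          simpa using ((hasDerivAt_id x).const_mul (-(ε/2))).const_add (-(y 0)⁻¹)
        exact this.hasDerivWithinAt
      · intro x hx
        exact hz' x ⟨hx.1, lt_of_lt_of_le hx.2 (le_of_lt ht.2)⟩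
    have hkt := key ⟨ht.1, le_refl t⟩
    simp only at hkt
    have hyt : y t < 0 := hneg t ht
    have h1 : (0:ℝ) < -(y t)⁻¹ := by
      have := inv_lt_zero.mpr hyt
      linarith
    have h2 : (ε/2) * t < -(y 0)⁻¹ := by linarith
    have hy0inv : (0:ℝ) < -(y 0)⁻¹ := by
      have := inv_lt_zero.mpr hy0
      linarith
    rw [lt_div_iff_of_neg (by nlinarith : ε * y 0 < 0)]
    nlinarith [mul_lt_mul_of_neg_right h2 hy0, inv_mul_cancel₀ (ne_of_lt hy0)]
  -- conclude
  by_contra hcon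
  push_neg at hcon
  have hC : (0:ℝ) ≤ -2 / (ε * y 0) := by
    apply le_of_lt
    apply div_pos_of_neg_of_neg (by norm_num) (by nlinarith)
  exact absurd (key2 _ ⟨hC, hcon⟩) (lt_irrefl _)
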